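/- If the priority order π_m satisfies small burden-size priority (a π_m a' implies s(a) ≤ s(a')), then the completion Ĉ'_m satisfies the law of aggregate demand: for all X' ⊆ X and x ∉ X', |Ĉ'_m(X' ∪ {x})| ≥ |Ĉ'_m(X')|. -/

import Mathlib

/-- A contract at a fixed member state: `(asylum seeker, wait time)`.
Asylum seekers are labelled by naturals; `π a` is the priority rank of `a`
(smaller rank = higher priority); wait times are naturals. -/
abbrev Ctr := ℕ × ℕ

open Classical in
/-- Pick, from a nonempty set of contracts, the lowest-wait-time contract of the
highest-priority asylum seeker (lexicographic minimum of (rank, wait, agent)). -/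
noncomputable def pick (π : ℕ → ℕ) (Z : Finset Ctr) (h : Z.Nonempty) : Ctr :=
  let k := (Z.image fun x => toLex ((π x.1 : ℕ), toLex (x.2, x.1))).min'
    (h.image _)
  ((ofLex (ofLex k).2).2, (ofLex (ofLex k).2).1)

open Classical in
/-- One run of the greedy algorithm with fuel.  `excl = true` excludes all
contracts of already accepted asylum seekers (the rule `Ĉ_m`), `excl = false`
excludes only already accepted contracts (the completion `Ĉ'_m`). -/
noncomputable def run (s : ℕ → ℕ) (q : ℕ) (r π : ℕ → ℕ) (excl : Bool)
    (X' : Finset Ctr) : ℕ → Finset Ctr → Finset Ctr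
  | 0, acc => acc
  | n+1, acc =>
    let Z : Finset Ctr := X'.filter fun x =>
      (acc.filter fun y => y.2 = x.2).card < r x.2 ∧
      (excl = true → ∀ y ∈ acc, y.1 ≠ x.1) ∧
      (excl = false → x ∉ acc)
    if q ≤ acc.sum (fun x => s x.1) then acc
    else if h : Z.Nonempty then
      run s q r π excl X' n (insert (pick π Z h) acc)
    else acc

/-- The member state choice rule `Ĉ_m`. -/
noncomputable def Chat (s : ℕ → ℕ) (q : ℕ) (r π : ℕ → ℕ)
    (X' : Finset Ctr) : Finset Ctr :=
  run s q r π true X' (X'.card + 1) ∅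

/-- The completion `Ĉ'_m` of the member state choice rule. -/
noncomputable def Chat' (s : ℕ → ℕ) (q : ℕ) (r π : ℕ → ℕ)
    (X' : Finset Ctr) : Finset Ctr :=
  run s q r π false X' (X'.card + 1) ∅

def key (π : ℕ → ℕ) (x : Ctr) : Lex (ℕ × Lex (ℕ × ℕ)) :=
  toLex ((π x.1 : ℕ), toLex (x.2, x.1))

lemma pick_spec (π : ℕ → ℕ) (Z : Finset Ctr) (h : Z.Nonempty) :
    pick π Z h ∈ Z ∧ ∀ c ∈ Z, key π (pick π Z h) ≤ key π c := by
  classical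
  have hmem := Finset.min'_mem (Z.image fun x => toLex ((π x.1 : ℕ), toLex (x.2, x.1))) (h.image _)
  obtain ⟨z, hz, hzk⟩ := Finset.mem_image.1 hmem
  have hpz : pick π Z h = z := by
    unfold pick
    rw [← hzk]; rfl
  have hkz : key π z = (Z.image fun x => toLex ((π x.1 : ℕ), toLex (x.2, x.1))).min' (h.image _) := hzk
  refine ⟨hpz ▸ hz, fun c hc => ?_⟩
  rw [hpz, hkz]
  exact Finset.min'_le _ _ (Finset.mem_image_of_mem _ hc)

lemma s_le_of_key_le (s π : ℕ → ℕ) (hπ : Function.Injective π)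
    (hsmall : ∀ a a' : ℕ, π a < π a' → s a ≤ s a')
    {b a : Ctr} (h : key π b ≤ key π a) : s b.1 ≤ s a.1 := by
  rcases (Prod.Lex.le_iff).1 h with hlt | ⟨heq, _⟩
  · exact hsmall _ _ hlt
  · rw [hπ heq]

lemma exchange (r : ℕ → ℕ) {A B : Finset Ctr}
    (hA : ∀ w, (A.filter fun y => y.2 = w).card ≤ r w) (hcard : B.card < A.card) :
    ∃ e ∈ A, e ∉ B ∧ (B.filter fun y => y.2 = e.2).card < r e.2 := by
  classical
  set W := (A ∪ B).image Prod.snd with hW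
  have hAc : A.card = ∑ w ∈ W, (A.filter fun y => y.2 = w).card :=
    Finset.card_eq_sum_card_fiberwise
      (fun z hz => Finset.mem_image_of_mem _ (Finset.mem_union_left _ hz))
  have hBc : B.card = ∑ w ∈ W, (B.filter fun y => y.2 = w).card :=
    Finset.card_eq_sum_card_fiberwise
      (fun z hz => Finset.mem_image_of_mem _ (Finset.mem_union_right _ hz))
  have hex : ∃ w ∈ W, (B.filter fun y => y.2 = w).card < (A.filter fun y => y.2 = w).card := by
    by_contra hcon
    push_neg at hcon
    have : A.card ≤ B.card := by
      rw [hAc, hBc]; exact Finset.sum_le_sum hcon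
    omega
  obtain ⟨w, hw, hlt⟩ := hex
  have hns : ¬ (A.filter fun y => y.2 = w) ⊆ (B.filter fun y => y.2 = w) :=
    fun hsub => absurd (Finset.card_le_card hsub) (not_le.2 hlt)
  obtain ⟨e, heA, heB⟩ := Finset.not_subset.1 hns
  obtain ⟨heA', hew⟩ := Finset.mem_filter.1 heA
  refine ⟨e, heA', fun hB => heB (Finset.mem_filter.2 ⟨hB, hew⟩), ?_⟩
  rw [hew]
  exact lt_of_lt_of_le hlt (hA w)

lemma subset_run (s : ℕ → ℕ) (q : ℕ) (r π : ℕ → ℕ) (e : Bool) (X : Finset Ctr) :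
    ∀ n A, A ⊆ run s q r π e X n A := by
  intro n
  induction n with
  | zero => intro A; rw [run]
  | succ n ih =>
    intro A
    rw [run]
    split_ifs with h1 h2
    · exact subset_rfl
    · exact (Finset.subset_insert _ _).trans (ih _)
    · exact subset_rfl

lemma run_card_le (s : ℕ → ℕ) (q : ℕ) (r π : ℕ → ℕ)
    (hπ : Function.Injective π) (hsmall : ∀ a a' : ℕ, π a < π a' → s a ≤ s a')
    {X Y : Finset Ctr} (hXY : X ⊆ Y) :
    ∀ n m : ℕ, n ≤ m → ∀ A B : Finset Ctr,
      A ⊆ X →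
      (∀ w, (A.filter fun y => y.2 = w).card ≤ r w) →
      B.card = A.card →
      B.sum (fun z => s z.1) ≤ A.sum (fun z => s z.1) →
      (∀ a ∈ A, ∀ c ∈ X, c ∉ A → (A.filter fun y => y.2 = c.2).card < r c.2 →
        key π a ≤ key π c) →
      (run s q r π false X n A).card ≤ (run s q r π false Y m B).card := by
  intro n
  induction n with
  | zero =>
    intro m _ A B _ _ hcard _ _
    rw [run]
    calc A.card = B.card := hcard.symm
      _ ≤ _ := Finset.card_le_card (subset_run s q r π false Y m B)
  | succ n ih =>
    intro m hnm A B hAX hAind hcard hsum hinv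
    obtain ⟨m', rfl⟩ : ∃ m', m = m' + 1 := ⟨m - 1, by omega⟩
    have htriv : A.card ≤ (run s q r π false Y (m' + 1) B).card := by
      calc A.card = B.card := hcard.symm
        _ ≤ _ := Finset.card_le_card (subset_run s q r π false Y _ B)
    rw [run]
    by_cases hq : q ≤ A.sum (fun z => s z.1)
    · rw [if_pos hq]; exact htriv
    · rw [if_neg hq]
      set ZX := X.filter fun c =>
        (A.filter fun y => y.2 = c.2).card < r c.2 ∧
        ((false : Bool) = true → ∀ y ∈ A, y.1 ≠ c.1) ∧
        ((false : Bool) = false → c ∉ A) with hZX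
      by_cases hZ : ZX.Nonempty
      · rw [dif_pos hZ]
        set a' := pick π ZX hZ with ha'
        obtain ⟨haZ, hamin⟩ := pick_spec π ZX hZ
        rw [← ha'] at haZ hamin
        obtain ⟨haX, hacap, -, hanotA⟩ := Finset.mem_filter.1 haZ
        have hanA : a' ∉ A := hanotA rfl
        -- independence of insert a' A
        have hA'ind : ∀ w, ((insert a' A).filter fun y => y.2 = w).card ≤ r w := by
          intro w
          rw [Finset.filter_insert]
          split_ifs with hw
          · calc (insert a' (A.filter fun y => y.2 = w)).card
                ≤ (A.filter fun y => y.2 = w).card + 1 := Finset.card_insert_le _ _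
              _ ≤ r w := by subst hw; omega
          · exact hAind w
        -- exchange to find a candidate for B
        have hcard' : B.card < (insert a' A).card := by
          rw [Finset.card_insert_of_notMem hanA]; omega
        obtain ⟨e, heA', heB, hecap⟩ := exchange r hA'ind hcard'
        have heX : e ∈ X := by
          rcases Finset.mem_insert.1 heA' with rfl | h
          · exact haX
          · exact hAX h
        have hqB : ¬ q ≤ B.sum (fun z => s z.1) := fun h => hq (h.trans hsum)
        rw [run]
        rw [if_neg hqB]
        set ZY := Y.filter fun c =>
          (B.filter fun y => y.2 = c.2).card < r c.2 ∧
          ((false : Bool) = true → ∀ y ∈ B, y.1 ≠ c.1) ∧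
          ((false : Bool) = false → c ∉ B) with hZY
        have heZY : e ∈ ZY := by
          refine Finset.mem_filter.2 ⟨hXY heX, hecap, ?_, fun _ => heB⟩
          intro h; exact absurd h (by simp)
        have hZYne : ZY.Nonempty := ⟨e, heZY⟩
        rw [dif_pos hZYne]
        set b' := pick π ZY hZYne with hb'
        obtain ⟨hbZ, hbmin⟩ := pick_spec π ZY hZYne
        rw [← hb'] at hbZ hbmin
        obtain ⟨hbY, hbcap, -, hbnotB⟩ := Finset.mem_filter.1 hbZ
        have hbnB : b' ∉ B := hbnotB rfl
        -- key b' ≤ key a'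
        have hkey : key π b' ≤ key π a' := by
          refine (hbmin e heZY).trans ?_
          rcases Finset.mem_insert.1 heA' with rfl | h
          · exact le_refl _
          · exact hinv e h a' haX hanA hacap
        have hsb : s b'.1 ≤ s a'.1 := s_le_of_key_le s π hπ hsmall hkey
        -- apply IH
        apply ih m' (by omega)
        · exact Finset.insert_subset haX hAX
        · exact hA'ind
        · rw [Finset.card_insert_of_notMem hanA, Finset.card_insert_of_notMem hbnB, hcard]
        · rw [Finset.sum_insert hanA, Finset.sum_insert hbnB]
          exact add_le_add hsb hsum
        · intro a ha c hcX hcA' hccap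
          have hcA : c ∉ A := fun h => hcA' (Finset.mem_insert_of_mem h)
          have hccap' : (A.filter fun y => y.2 = c.2).card < r c.2 :=
            lt_of_le_of_lt (Finset.card_le_card (Finset.filter_subset_filter _
              (Finset.subset_insert _ _))) hccap
          have hcZ : c ∈ ZX := Finset.mem_filter.2 ⟨hcX, hccap', fun h => absurd h (by simp),
            fun _ => hcA⟩
          rcases Finset.mem_insert.1 ha with rfl | haA
          · exact hamin c hcZ
          · exact hinv a haA c hcX hcA hccap'
      · rw [dif_neg hZ]; exact htriv


/-- Proposition 2(iv): under small burden-size priority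
(higher priority, i.e. smaller rank, implies weakly smaller burden-size), the
completion `Ĉ'_m` satisfies the law of aggregate demand. -/
theorem chat'_lad_of_small (s : ℕ → ℕ) (q : ℕ) (r π : ℕ → ℕ)
    (hπ : Function.Injective π)
    (hsmall : ∀ a a' : ℕ, π a < π a' → s a ≤ s a')
    (X' : Finset Ctr) (x : Ctr) (hx : x ∉ X') :
    (Chat' s q r π X').card ≤ (Chat' s q r π (insert x X')).card := by
  unfold Chat'
  refine run_card_le s q r π hπ hsmall (Finset.subset_insert x X') _ _ ?_ ∅ ∅
    (Finset.empty_subset _) (by simp) rfl le_rfl (by simp)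
  rw [Finset.card_insert_of_notMem hx]
  omega
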